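/- arXiv:2303.17793 — 2 statements merged into one kernel-verified Lean document; each statement's English description precedes it below -/
import Mathlib

section
/- Let f : ℝ³ → ℝ⁵ be the Veronese map f(x₀,x₁,x₂) = (1/√3)·(2x₀x₁, x₀² − x₁², 2x₀x₂, 2x₁x₂, (x₀² + x₁² − 2x₂²)/√3). There exists a topological embedding g of the real projective plane ℙ(ℝ³) into ℝ⁵ whose image is contained in the unit sphere of ℝ⁵ and which is induced by f, in the sense that g([x]) = f(x) for every x ∈ ℝ³ with ‖x‖² = 3/2, where [x] denotes the line through x. -/
open scoped LinearAlgebra.Projectivization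

/-- The Veronese map `f : ℝ³ → ℝ⁵`,
`f(x₀,x₁,x₂) = (1/√3)·(2x₀x₁, x₀² − x₁², 2x₀x₂, 2x₁x₂, (x₀² + x₁² − 2x₂²)/√3)`. -/
noncomputable def veronese (x : EuclideanSpace ℝ (Fin 3)) : EuclideanSpace ℝ (Fin 5) :=
  (WithLp.equiv 2 (Fin 5 → ℝ)).symm <|
    (1 / Real.sqrt 3) •
      ![2 * x 0 * x 1,
        x 0 ^ 2 - x 1 ^ 2,
        2 * x 0 * x 2,
        2 * x 1 * x 2,
        (x 0 ^ 2 + x 1 ^ 2 - 2 * x 2 ^ 2) / Real.sqrt 3]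

/-- The real projective plane, as the projectivization of `ℝ³`, carries the quotient
topology induced from `ℝ³ \ {0}`. -/
noncomputable instance : TopologicalSpace (ℙ ℝ (EuclideanSpace ℝ (Fin 3))) :=
  instTopologicalSpaceQuotient

lemma veronese_apply (x : EuclideanSpace ℝ (Fin 3)) (i : Fin 5) :
    veronese x i = (1 / Real.sqrt 3) *
      ![2 * x 0 * x 1,
        x 0 ^ 2 - x 1 ^ 2,
        2 * x 0 * x 2,
        2 * x 1 * x 2,
        (x 0 ^ 2 + x 1 ^ 2 - 2 * x 2 ^ 2) / Real.sqrt 3] i := by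
  fin_cases i <;> simp [veronese, PiLp.toLp_apply]

lemma veronese_smul' (c : ℝ) (x : EuclideanSpace ℝ (Fin 3)) :
    veronese (c • x) = c ^ 2 • veronese x := by
  ext i
  have h : ∀ j : Fin 3, (c • x) j = c * x j := fun j => rfl
  fin_cases i <;>
    simp [veronese_apply, h, PiLp.smul_apply, smul_eq_mul] <;> ring

lemma norm_sq_three (x : EuclideanSpace ℝ (Fin 3)) :
    ‖x‖ ^ 2 = x 0 ^ 2 + x 1 ^ 2 + x 2 ^ 2 := by
  rw [EuclideanSpace.norm_eq, Real.sq_sqrt (by positivity)]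
  simp [Fin.sum_univ_three, sq_abs]

lemma norm_veronese (x : EuclideanSpace ℝ (Fin 3)) :
    ‖veronese x‖ = 2 / 3 * ‖x‖ ^ 2 := by
  have h3 : Real.sqrt 3 ^ 2 = 3 := Real.sq_sqrt (by norm_num)
  have h3' : Real.sqrt 3 ≠ 0 := by positivity
  rw [EuclideanSpace.norm_eq]
  rw [show ∑ i, ‖veronese x i‖ ^ 2 = (2 / 3 * ‖x‖ ^ 2) ^ 2 by
    simp only [Fin.sum_univ_five, veronese_apply, Real.norm_eq_abs, sq_abs, norm_sq_three]
    simp only [Matrix.cons_val_zero, Matrix.cons_val_one, Matrix.head_cons,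
      Matrix.cons_val_two, Matrix.tail_cons, Matrix.cons_val_three, Matrix.cons_val_four]
    field_simp
    ring_nf
    rw [show Real.sqrt 3 ^ 4 = (Real.sqrt 3 ^ 2) ^ 2 by ring, h3]
    ring]
  exact Real.sqrt_sq (by positivity)

lemma aux_prod (u w : EuclideanSpace ℝ (Fin 3)) (hu : u ≠ 0)
    (h : ∀ i j, u i * u j = w i * w j) : w = u ∨ w = -u := by
  obtain ⟨i, hi⟩ : ∃ i, u i ≠ 0 := by
    by_contra hc; push_neg at hc; exact hu (by ext j; simpa using hc j)
  rcases mul_self_eq_mul_self_iff.mp (h i i) with hii | hii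
  · left; ext j
    have hij := h i j
    rw [hii] at hij
    have hwi : w i ≠ 0 := by rw [← hii]; exact hi
    exact (mul_left_cancel₀ hwi hij).symm
  · right; ext j
    have hij := h i j
    rw [hii] at hij
    have hwi : w i ≠ 0 := by intro h0; rw [h0, neg_zero] at hii; exact hi hii
    simp only [PiLp.neg_apply]
    exact mul_left_cancel₀ hwi (by linear_combination -hij)

lemma veronese_inj {u w : EuclideanSpace ℝ (Fin 3)} (hu : ‖u‖ ^ 2 = 3 / 2)
    (hw : ‖w‖ ^ 2 = 3 / 2) (h : veronese u = veronese w) : w = u ∨ w = -u := by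
  have h3 : Real.sqrt 3 ^ 2 = 3 := Real.sq_sqrt (by norm_num)
  have h3' : Real.sqrt 3 ≠ 0 := by positivity
  have hc : ∀ i, veronese u i = veronese w i := fun i => by rw [h]
  have e0 := hc 0
  have e1 := hc 1
  have e2 := hc 2
  have e3 := hc 3
  have e4 := hc 4
  simp only [veronese_apply, Matrix.cons_val_zero, Matrix.cons_val_one, Matrix.head_cons,
    Matrix.cons_val_two, Matrix.tail_cons, Matrix.cons_val_three,
    Matrix.cons_val_four] at e0 e1 e2 e3 e4
  rw [norm_sq_three] at hu hw
  have e0' : u 0 * u 1 = w 0 * w 1 := by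
    field_simp at e0; linarith
  have e1' : u 0 ^ 2 - u 1 ^ 2 = w 0 ^ 2 - w 1 ^ 2 := by
    field_simp at e1; linarith
  have e2' : u 0 * u 2 = w 0 * w 2 := by
    field_simp at e2; linarith
  have e3' : u 1 * u 2 = w 1 * w 2 := by
    field_simp at e3; linarith
  have e4' : u 0 ^ 2 + u 1 ^ 2 - 2 * u 2 ^ 2 = w 0 ^ 2 + w 1 ^ 2 - 2 * w 2 ^ 2 := by
    field_simp at e4
    linarith
  have hune : u ≠ 0 := by
    intro h0; rw [h0] at hu; simp at hu; linarith
  have hsq2 : u 2 ^ 2 = w 2 ^ 2 := by linarith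
  have hsq0 : u 0 ^ 2 = w 0 ^ 2 := by linarith
  have hsq1 : u 1 ^ 2 = w 1 ^ 2 := by linarith
  refine aux_prod u w hune ?_
  intro i j
  fin_cases i <;> fin_cases j <;>
    simp only [Fin.zero_eta, Fin.mk_one, Fin.reduceFinMk] <;>
    first
    | linear_combination hsq0
    | linear_combination hsq1
    | linear_combination hsq2
    | linear_combination e0'
    | linear_combination e2'
    | linear_combination e3'

/-- The rescaled Veronese map, constant on lines through the origin. -/
noncomputable def vmap (x : EuclideanSpace ℝ (Fin 3)) : EuclideanSpace ℝ (Fin 5) :=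
  ((3 : ℝ) / 2 * (‖x‖ ^ 2)⁻¹) • veronese x

lemma vmap_smul {c : ℝ} (hc : c ≠ 0) (x : EuclideanSpace ℝ (Fin 3)) (hx : x ≠ 0) :
    vmap (c • x) = vmap x := by
  have hxn : ‖x‖ ≠ 0 := norm_ne_zero_iff.mpr hx
  unfold vmap
  rw [veronese_smul', norm_smul, smul_smul]
  congr 1
  rw [mul_pow, Real.norm_eq_abs, sq_abs]
  field_simp

lemma vmap_eq {x : EuclideanSpace ℝ (Fin 3)} (hx : ‖x‖ ^ 2 = 3 / 2) :
    vmap x = veronese x := by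
  unfold vmap
  rw [hx]
  norm_num

lemma vmap_norm (x : EuclideanSpace ℝ (Fin 3)) (hx : x ≠ 0) : ‖vmap x‖ = 1 := by
  have hxn : ‖x‖ ≠ 0 := norm_ne_zero_iff.mpr hx
  unfold vmap
  rw [norm_smul, norm_veronese, Real.norm_eq_abs, abs_of_pos (by positivity)]
  field_simp

lemma veronese_cont : Continuous veronese := by
  unfold veronese
  refine Continuous.comp (PiLp.continuous_toLp 2 (fun _ : Fin 5 => ℝ)) ?_
  have hcoord : ∀ i : Fin 3, Continuous fun x : EuclideanSpace ℝ (Fin 3) => x i :=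
    fun i => (continuous_apply i).comp (PiLp.continuous_ofLp 2 _)
  refine Continuous.fun_const_smul ?_ _
  refine continuous_pi fun i => ?_
  fin_cases i
  · exact ((continuous_const.mul (hcoord 0)).mul (hcoord 1))
  · exact ((hcoord 0).pow 2).sub ((hcoord 1).pow 2)
  · exact ((continuous_const.mul (hcoord 0)).mul (hcoord 2))
  · exact ((continuous_const.mul (hcoord 1)).mul (hcoord 2))
  · exact ((((hcoord 0).pow 2).add ((hcoord 1).pow 2)).sub
      (continuous_const.mul ((hcoord 2).pow 2))).div_const _

lemma vmap_cont : Continuous fun v : { v : EuclideanSpace ℝ (Fin 3) // v ≠ 0 } => vmap v.1 := by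
  unfold vmap
  apply Continuous.fun_smul
  · fun_prop (disch := intro v; exact pow_ne_zero 2 (norm_ne_zero_iff.mpr v.2))
  · exact veronese_cont.comp continuous_subtype_val

lemma normalize_sq {v : EuclideanSpace ℝ (Fin 3)} (hv : v ≠ 0) :
    ‖(Real.sqrt (3 / 2) / ‖v‖) • v‖ ^ 2 = 3 / 2 := by
  have hvn : ‖v‖ ≠ 0 := norm_ne_zero_iff.mpr hv
  rw [norm_smul, Real.norm_eq_abs, mul_pow, sq_abs, div_pow,
    Real.sq_sqrt (by norm_num : (3:ℝ)/2 ≥ 0)]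
  field_simp

instance : CompactSpace (ℙ ℝ (EuclideanSpace ℝ (Fin 3))) := by
  constructor
  let s : Metric.sphere (0 : EuclideanSpace ℝ (Fin 3)) 1 → ℙ ℝ (EuclideanSpace ℝ (Fin 3)) :=
    fun v => Projectivization.mk ℝ v.1 (by
      intro h0
      have := v.2
      rw [mem_sphere_zero_iff_norm, h0] at this
      simp at this)
  have hscont : Continuous s := by
    have : Continuous fun v : Metric.sphere (0 : EuclideanSpace ℝ (Fin 3)) 1 =>
        (⟨v.1, by
          intro h0
          have := v.2
          rw [mem_sphere_zero_iff_norm, h0] at this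
          simp at this⟩ : { w : EuclideanSpace ℝ (Fin 3) // w ≠ 0 }) :=
      continuous_subtype_val.subtype_mk _
    exact continuous_quotient_mk'.comp this
  have hsurj : Function.Surjective s := by
    intro p
    induction p with
    | h v hv =>
      have hvn : ‖v‖ ≠ 0 := norm_ne_zero_iff.mpr hv
      refine ⟨⟨‖v‖⁻¹ • v, ?_⟩, ?_⟩
      · rw [mem_sphere_zero_iff_norm, norm_smul, Real.norm_eq_abs,
          abs_of_pos (by positivity)]
        field_simp
      · show Projectivization.mk ℝ (‖v‖⁻¹ • v) _ = Projectivization.mk ℝ v hv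
        rw [Projectivization.mk_eq_mk_iff']
        exact ⟨‖v‖⁻¹, rfl⟩
  rw [← Set.range_eq_univ.mpr hsurj]
  exact isCompact_range hscont

/-- There is a topological embedding `g` of the real projective plane `ℙ(ℝ³)` into `ℝ⁵`
whose image lies in the unit sphere of `ℝ⁵` and which is induced by the Veronese map, in
the sense that `g([x]) = f(x)` for every `x` with `‖x‖² = 3/2`. -/
theorem veronese_descends_to_projective_embedding :
    ∃ g : ℙ ℝ (EuclideanSpace ℝ (Fin 3)) → EuclideanSpace ℝ (Fin 5),
      Topology.IsEmbedding g ∧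
      (∀ p, g p ∈ Metric.sphere (0 : EuclideanSpace ℝ (Fin 5)) 1) ∧
      (∀ (x : EuclideanSpace ℝ (Fin 3)) (hx : ‖x‖ ^ 2 = 3 / 2),
        g (Projectivization.mk ℝ x (by intro h; rw [h] at hx; simp at hx; linarith)) =
          veronese x) := by
  have hf : ∀ (a b : { v : EuclideanSpace ℝ (Fin 3) // v ≠ 0 }) (t : ℝ),
      (a : EuclideanSpace ℝ (Fin 3)) = t • (b : EuclideanSpace ℝ (Fin 3)) →
      vmap a.1 = vmap b.1 := by
    intro a b t hab
    have ht : t ≠ 0 := by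
      rintro rfl
      rw [zero_smul] at hab
      exact a.2 hab
    rw [show a.1 = t • b.1 from hab]
    exact vmap_smul ht b.1 b.2
  refine ⟨Projectivization.lift (fun v => vmap v.1) hf, ?_, ?_, ?_⟩
  · -- embedding
    have hcont : Continuous (Projectivization.lift
        (fun v : { v : EuclideanSpace ℝ (Fin 3) // v ≠ 0 } => vmap v.1) hf) := by
      exact vmap_cont.quotient_lift _
    have hinj : Function.Injective (Projectivization.lift
        (fun v : { v : EuclideanSpace ℝ (Fin 3) // v ≠ 0 } => vmap v.1) hf) := by
      intro p q hpq
      induction p with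
      | h v hv =>
        induction q with
        | h w hw =>
          rw [Projectivization.lift_mk, Projectivization.lift_mk] at hpq
          have hvn : ‖v‖ ≠ 0 := norm_ne_zero_iff.mpr hv
          have hwn : ‖w‖ ≠ 0 := norm_ne_zero_iff.mpr hw
          set cv : ℝ := Real.sqrt (3 / 2) / ‖v‖ with hcvdef
          set cw : ℝ := Real.sqrt (3 / 2) / ‖w‖ with hcwdef
          have hcv : cv ≠ 0 := by
            rw [hcvdef]; positivity
          have hcw : cw ≠ 0 := by
            rw [hcwdef]; positivity
          have hnu : ‖cv • v‖ ^ 2 = 3 / 2 := normalize_sq hv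
          have hnw : ‖cw • w‖ ^ 2 = 3 / 2 := normalize_sq hw
          have hveq : veronese (cv • v) = veronese (cw • w) := by
            rw [← vmap_eq hnu, ← vmap_eq hnw, vmap_smul hcv v hv, vmap_smul hcw w hw, hpq]
          rcases veronese_inj hnu hnw hveq with hcase | hcase
          · rw [Projectivization.mk_eq_mk_iff']
            refine ⟨cw / cv, ?_⟩
            rw [div_eq_mul_inv, mul_comm, mul_smul, hcase, inv_smul_smul₀ hcv]
          · rw [Projectivization.mk_eq_mk_iff']
            refine ⟨-(cw / cv), ?_⟩
            rw [neg_smul, div_eq_mul_inv, mul_comm, mul_smul, hcase, smul_neg,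
              neg_neg, inv_smul_smul₀ hcv]
    exact (hcont.isClosedEmbedding hinj).isEmbedding
  · -- sphere
    intro p
    induction p with
    | h v hv =>
      rw [Projectivization.lift_mk]
      exact mem_sphere_zero_iff_norm.mpr (vmap_norm v hv)
  · -- formula
    intro x hx
    rw [Projectivization.lift_mk]
    exact vmap_eq hx
end

section
/- Let u : ℝ² → ℝ be a twice continuously differentiable function, let v₁, v₂ ∈ ℝ² be linearly independent vectors, and suppose u is doubly periodic: u(x + v₁) = u(x) and u(x + v₂) = u(x) for all x ∈ ℝ². If u satisfies the equation Δu(x) + 2‖∇u(x)‖² = 0 for every x ∈ ℝ², where Δu is the Euclidean Laplacian and ∇u the gradient of u, then u is constant. -/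
open MeasureTheory intervalIntegral Set

lemma aux_swap (G : ℝ → ℝ → ℝ) (hG : Continuous (Function.uncurry G)) {a b c d : ℝ}
    (hab : a ≤ b) (hcd : c ≤ d) :
    ∫ s in a..b, ∫ t in c..d, G s t = ∫ t in c..d, ∫ s in a..b, G s t := by
  simp_rw [intervalIntegral.integral_of_le hab, intervalIntegral.integral_of_le hcd]
  apply MeasureTheory.integral_integral_swap
  have h1 : IntegrableOn (Function.uncurry G) (Set.Ioc a b ×ˢ Set.Ioc c d) :=
    (hG.locallyIntegrable.integrableOn_isCompact (isCompact_Icc.prod isCompact_Icc)).mono_set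
      (Set.prod_mono Set.Ioc_subset_Icc_self Set.Ioc_subset_Icc_self)
  rwa [IntegrableOn, Measure.volume_eq_prod, ← Measure.prod_restrict] at h1

lemma aux_per {u : EuclideanSpace ℝ (Fin 2) → ℝ} (hd : Differentiable ℝ u)
    {v : EuclideanSpace ℝ (Fin 2)}
    (hper : ∀ x, u (x + v) = u x) (x : EuclideanSpace ℝ (Fin 2)) :
    fderiv ℝ u (x + v) = fderiv ℝ u x := by
  have h1 : HasFDerivAt (fun y => u (y + v)) (fderiv ℝ u (x + v)) x := by
    have := (hd (x + v)).hasFDerivAt.comp x ((hasFDerivAt_id x).add_const v)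
    exact this
  have h2 : (fun y => u (y + v)) = u := funext hper
  rw [h2] at h1
  exact (h1.fderiv).symm ▸ rfl

set_option maxHeartbeats 1000000 in
/-- Let `u : ℝ² → ℝ` be `C²` and doubly periodic with respect to two linearly
independent periods `v₁, v₂`. If `Δu + 2‖∇u‖² = 0` everywhere, where `Δu` is the
Euclidean Laplacian and `∇u` the gradient, then `u` is constant. -/
theorem doubly_periodic_solution_is_constant
    (u : EuclideanSpace ℝ (Fin 2) → ℝ) (hu : ContDiff ℝ 2 u)
    (v₁ v₂ : EuclideanSpace ℝ (Fin 2)) (hindep : LinearIndependent ℝ ![v₁, v₂])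
    (hper₁ : ∀ x, u (x + v₁) = u x) (hper₂ : ∀ x, u (x + v₂) = u x)
    (heq : ∀ x,
      (∑ j : Fin 2,
        fderiv ℝ (fun y => fderiv ℝ u y (EuclideanSpace.single j 1)) x
          (EuclideanSpace.single j 1))
        + 2 * ‖gradient u x‖ ^ 2 = 0) :
    ∀ x y, u x = u y := by
  have hud : Differentiable ℝ u := hu.differentiable (by norm_num)
  set f : EuclideanSpace ℝ (Fin 2) → EuclideanSpace ℝ (Fin 2) →L[ℝ] ℝ := fderiv ℝ u with hf_def
  have hf2 : ContDiff ℝ 1 f := hu.fderiv_right (le_refl 2)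
  have hfd : Differentiable ℝ f := hf2.differentiable (by norm_num)
  have hcff : Continuous (fderiv ℝ f) := hf2.continuous_fderiv (by norm_num)
  have hcard : Fintype.card (Fin 2) = Module.finrank ℝ (EuclideanSpace ℝ (Fin 2)) := by
    simp [finrank_euclideanSpace_fin]
  set B : Module.Basis (Fin 2) ℝ (EuclideanSpace ℝ (Fin 2)) :=
    basisOfLinearIndependentOfCardEqFinrank hindep hcard with hB_def
  have hBcoe : ⇑B = ![v₁, v₂] := coe_basisOfLinearIndependentOfCardEqFinrank hindep hcard
  have hrepr : ∀ w : EuclideanSpace ℝ (Fin 2), (B.repr w 0) • v₁ + (B.repr w 1) • v₂ = w := by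
    intro w
    have h := B.sum_repr w
    rwa [Fin.sum_univ_two, hBcoe] at h
  set r : Fin 2 → Fin 2 → ℝ :=
    fun i j => B.repr (EuclideanSpace.single j (1 : ℝ)) i with hr_def
  -- the Laplacian in the (skew) basis v₁, v₂
  have hpt : ∀ x : EuclideanSpace ℝ (Fin 2),
      (r 0 0 * r 0 0 + r 0 1 * r 0 1) * fderiv ℝ f x v₁ v₁
      + (r 0 0 * r 1 0 + r 0 1 * r 1 1) * fderiv ℝ f x v₁ v₂
      + (r 1 0 * r 0 0 + r 1 1 * r 0 1) * fderiv ℝ f x v₂ v₁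
      + (r 1 0 * r 1 0 + r 1 1 * r 1 1) * fderiv ℝ f x v₂ v₂
      = -(2 * ‖gradient u x‖ ^ 2) := by
    intro x
    have h := heq x
    rw [Fin.sum_univ_two] at h
    have hj : ∀ j : Fin 2,
        fderiv ℝ (fun y => fderiv ℝ u y (EuclideanSpace.single j (1 : ℝ))) x
          (EuclideanSpace.single j (1 : ℝ)) =
        fderiv ℝ f x (EuclideanSpace.single j (1 : ℝ)) (EuclideanSpace.single j (1 : ℝ)) := by
      intro j
      have hc := fderiv_clm_apply (c := fun y => fderiv ℝ u y)
        (u := fun _ => EuclideanSpace.single j (1 : ℝ)) (hfd x) (differentiableAt_const _)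
      rw [show (fun y => fderiv ℝ u y) = f from rfl] at hc
      rw [hc]
      simp
    have hE : ∀ j : Fin 2,
        fderiv ℝ f x (EuclideanSpace.single j (1 : ℝ)) (EuclideanSpace.single j (1 : ℝ)) =
        r 0 j * r 0 j * fderiv ℝ f x v₁ v₁ + r 0 j * r 1 j * fderiv ℝ f x v₁ v₂
        + r 1 j * r 0 j * fderiv ℝ f x v₂ v₁ + r 1 j * r 1 j * fderiv ℝ f x v₂ v₂ := by
      intro j
      conv_lhs => rw [← hrepr (EuclideanSpace.single j (1 : ℝ))]
      simp only [map_add, _root_.map_smul, ContinuousLinearMap.add_apply,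
        ContinuousLinearMap.smul_apply, smul_eq_mul, ContinuousLinearMap.coe_smul',
        Pi.smul_apply]
      ring
    rw [hj 0, hj 1, hE 0, hE 1] at h
    linear_combination h
  -- it suffices to show the derivative vanishes everywhere
  suffices hzero : ∀ x, fderiv ℝ u x = 0 by
    exact fun x y => is_const_of_fderiv_eq_zero hud hzero x y
  intro x₀
  set s₀ : ℝ := B.repr x₀ 0 with hs₀
  set t₀ : ℝ := B.repr x₀ 1 with ht₀
  set φ : ℝ → ℝ → EuclideanSpace ℝ (Fin 2) := fun s t => s • v₁ + t • v₂ with hφ_def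
  have hx₀ : φ s₀ t₀ = x₀ := hrepr x₀
  have hfper1 : ∀ x, f (x + v₁) = f x := fun x => aux_per hud hper₁ x
  have hfper2 : ∀ x, f (x + v₂) = f x := fun x => aux_per hud hper₂ x
  have hφ1 : ∀ s t, φ (s + 1) t = φ s t + v₁ := by
    intro s t; simp only [hφ_def, add_smul, one_smul]; abel
  have hφ2 : ∀ s t, φ s (t + 1) = φ s t + v₂ := by
    intro s t; simp only [hφ_def, add_smul, one_smul]; abel
  have hφc : Continuous fun p : ℝ × ℝ => φ p.1 p.2 :=
    (continuous_fst.smul continuous_const).add (continuous_snd.smul continuous_const)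
  have hGc : ∀ w z : EuclideanSpace ℝ (Fin 2),
      Continuous fun p : ℝ × ℝ => fderiv ℝ f (φ p.1 p.2) w z := fun w z =>
    ((hcff.comp hφc).clm_apply continuous_const).clm_apply continuous_const
  -- FTC in the `s` direction
  have key1 : ∀ (w : EuclideanSpace ℝ (Fin 2)) (t : ℝ),
      ∫ s in (s₀ - 2⁻¹)..(s₀ + 2⁻¹), fderiv ℝ f (φ s t) v₁ w = 0 := by
    intro w t
    have hD : ∀ s : ℝ, HasDerivAt (fun s => f (φ s t) w) (fderiv ℝ f (φ s t) v₁ w) s := by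
      intro s
      have h1 : HasDerivAt (fun s : ℝ => φ s t) v₁ s := by
        have := ((hasDerivAt_id s).smul_const v₁).add_const (t • v₂)
        simpa [hφ_def] using this
      have h2 := (hfd (φ s t)).hasFDerivAt.comp_hasDerivAt s h1
      have h3 := h2.clm_apply (hasDerivAt_const s w)
      simpa using h3
    have hint : IntervalIntegrable (fun s => fderiv ℝ f (φ s t) v₁ w) volume
        (s₀ - 2⁻¹) (s₀ + 2⁻¹) :=
      ((hGc v₁ w).comp (continuous_id.prodMk continuous_const)).intervalIntegrable _ _
    rw [intervalIntegral.integral_eq_sub_of_hasDerivAt (fun s _ => hD s) hint]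
    rw [show s₀ + 2⁻¹ = (s₀ - 2⁻¹) + 1 by ring, hφ1, hfper1]
    simp
  -- FTC in the `t` direction
  have key2 : ∀ (w : EuclideanSpace ℝ (Fin 2)) (s : ℝ),
      ∫ t in (t₀ - 2⁻¹)..(t₀ + 2⁻¹), fderiv ℝ f (φ s t) v₂ w = 0 := by
    intro w s
    have hD : ∀ t : ℝ, HasDerivAt (fun t => f (φ s t) w) (fderiv ℝ f (φ s t) v₂ w) t := by
      intro t
      have h1 : HasDerivAt (fun t : ℝ => φ s t) v₂ t := by
        have := (((hasDerivAt_id t).smul_const v₂).const_add (s • v₁))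
        simpa [hφ_def] using this
      have h2 := (hfd (φ s t)).hasFDerivAt.comp_hasDerivAt t h1
      have h3 := h2.clm_apply (hasDerivAt_const t w)
      simpa using h3
    have hint : IntervalIntegrable (fun t => fderiv ℝ f (φ s t) v₂ w) volume
        (t₀ - 2⁻¹) (t₀ + 2⁻¹) :=
      ((hGc v₂ w).comp (continuous_const.prodMk continuous_id)).intervalIntegrable _ _
    rw [intervalIntegral.integral_eq_sub_of_hasDerivAt (fun t _ => hD t) hint]
    rw [show t₀ + 2⁻¹ = (t₀ - 2⁻¹) + 1 by ring, hφ2, hfper2]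
    simp
  -- the double integral of ‖∇u‖² over the cell
  set F : ℝ → ℝ → ℝ := fun s t => ‖gradient u (φ s t)‖ ^ 2 with hF_def
  have hgradc : Continuous fun x => gradient u x := by
    have : (fun x => gradient u x) =
        fun x => (InnerProductSpace.toDual ℝ (EuclideanSpace ℝ (Fin 2))).symm (fderiv ℝ u x) :=
      rfl
    rw [this]
    exact (InnerProductSpace.toDual ℝ _).symm.continuous.comp hf2.continuous
  have hFc : Continuous (Function.uncurry F) :=
    ((hgradc.comp hφc).norm.pow 2)
  have hFnn : ∀ s t, 0 ≤ F s t := fun s t => by positivity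
  set I : ℝ → ℝ := fun s => ∫ t in (t₀ - 2⁻¹)..(t₀ + 2⁻¹), F s t with hI_def
  -- the inner integral in `t`
  have hinner : ∀ s : ℝ, -(2 * I s) =
      (r 0 0 * r 0 0 + r 0 1 * r 0 1) *
        (∫ t in (t₀ - 2⁻¹)..(t₀ + 2⁻¹), fderiv ℝ f (φ s t) v₁ v₁)
      + (r 0 0 * r 1 0 + r 0 1 * r 1 1) *
        (∫ t in (t₀ - 2⁻¹)..(t₀ + 2⁻¹), fderiv ℝ f (φ s t) v₁ v₂) := by
    intro s
    have i1 : IntervalIntegrable (fun t => fderiv ℝ f (φ s t) v₁ v₁) volume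
        (t₀ - 2⁻¹) (t₀ + 2⁻¹) :=
      ((hGc v₁ v₁).comp (continuous_const.prodMk continuous_id)).intervalIntegrable _ _
    have i2 : IntervalIntegrable (fun t => fderiv ℝ f (φ s t) v₁ v₂) volume
        (t₀ - 2⁻¹) (t₀ + 2⁻¹) :=
      ((hGc v₁ v₂).comp (continuous_const.prodMk continuous_id)).intervalIntegrable _ _
    have i3 : IntervalIntegrable (fun t => fderiv ℝ f (φ s t) v₂ v₁) volume
        (t₀ - 2⁻¹) (t₀ + 2⁻¹) :=
      ((hGc v₂ v₁).comp (continuous_const.prodMk continuous_id)).intervalIntegrable _ _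
    have i4 : IntervalIntegrable (fun t => fderiv ℝ f (φ s t) v₂ v₂) volume
        (t₀ - 2⁻¹) (t₀ + 2⁻¹) :=
      ((hGc v₂ v₂).comp (continuous_const.prodMk continuous_id)).intervalIntegrable _ _
    have step1 : -(2 * I s) = ∫ t in (t₀ - 2⁻¹)..(t₀ + 2⁻¹), -(2 * F s t) := by
      rw [hI_def]
      rw [← intervalIntegral.integral_const_mul, ← intervalIntegral.integral_neg]
    rw [step1]
    have step2 : ∀ t : ℝ, -(2 * F s t) =
        (r 0 0 * r 0 0 + r 0 1 * r 0 1) * fderiv ℝ f (φ s t) v₁ v₁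
        + (r 0 0 * r 1 0 + r 0 1 * r 1 1) * fderiv ℝ f (φ s t) v₁ v₂
        + (r 1 0 * r 0 0 + r 1 1 * r 0 1) * fderiv ℝ f (φ s t) v₂ v₁
        + (r 1 0 * r 1 0 + r 1 1 * r 1 1) * fderiv ℝ f (φ s t) v₂ v₂ :=
      fun t => (hpt (φ s t)).symm
    rw [intervalIntegral.integral_congr (g :=
      fun t => (r 0 0 * r 0 0 + r 0 1 * r 0 1) * fderiv ℝ f (φ s t) v₁ v₁
        + (r 0 0 * r 1 0 + r 0 1 * r 1 1) * fderiv ℝ f (φ s t) v₁ v₂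
        + (r 1 0 * r 0 0 + r 1 1 * r 0 1) * fderiv ℝ f (φ s t) v₂ v₁
        + (r 1 0 * r 1 0 + r 1 1 * r 1 1) * fderiv ℝ f (φ s t) v₂ v₂)
      (fun t _ => step2 t)]
    rw [intervalIntegral.integral_add (((i1.const_mul _).add (i2.const_mul _)).add
      (i3.const_mul _)) (i4.const_mul _),
      intervalIntegral.integral_add ((i1.const_mul _).add (i2.const_mul _)) (i3.const_mul _),
      intervalIntegral.integral_add (i1.const_mul _) (i2.const_mul _),
      intervalIntegral.integral_const_mul, intervalIntegral.integral_const_mul,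
      intervalIntegral.integral_const_mul, intervalIntegral.integral_const_mul,
      key2 v₁ s, key2 v₂ s]
    ring
  -- the outer integral in `s`
  have hIint : ∫ s in (s₀ - 2⁻¹)..(s₀ + 2⁻¹), I s = 0 := by
    have hcont1 : Continuous fun s => ∫ t in (t₀ - 2⁻¹)..(t₀ + 2⁻¹), fderiv ℝ f (φ s t) v₁ v₁ :=
      continuous_parametric_intervalIntegral_of_continuous'
        (f := fun s t => fderiv ℝ f (φ s t) v₁ v₁) (by exact hGc v₁ v₁) _ _
    have hcont2 : Continuous fun s => ∫ t in (t₀ - 2⁻¹)..(t₀ + 2⁻¹), fderiv ℝ f (φ s t) v₁ v₂ :=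
      continuous_parametric_intervalIntegral_of_continuous'
        (f := fun s t => fderiv ℝ f (φ s t) v₁ v₂) (by exact hGc v₁ v₂) _ _
    have houter : ∫ s in (s₀ - 2⁻¹)..(s₀ + 2⁻¹), -(2 * I s) =
        (r 0 0 * r 0 0 + r 0 1 * r 0 1) *
          (∫ s in (s₀ - 2⁻¹)..(s₀ + 2⁻¹),
            ∫ t in (t₀ - 2⁻¹)..(t₀ + 2⁻¹), fderiv ℝ f (φ s t) v₁ v₁)
        + (r 0 0 * r 1 0 + r 0 1 * r 1 1) *
          (∫ s in (s₀ - 2⁻¹)..(s₀ + 2⁻¹),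
            ∫ t in (t₀ - 2⁻¹)..(t₀ + 2⁻¹), fderiv ℝ f (φ s t) v₁ v₂) := by
      rw [intervalIntegral.integral_congr (g := fun s =>
        (r 0 0 * r 0 0 + r 0 1 * r 0 1) *
          (∫ t in (t₀ - 2⁻¹)..(t₀ + 2⁻¹), fderiv ℝ f (φ s t) v₁ v₁)
        + (r 0 0 * r 1 0 + r 0 1 * r 1 1) *
          (∫ t in (t₀ - 2⁻¹)..(t₀ + 2⁻¹), fderiv ℝ f (φ s t) v₁ v₂)) (fun s _ => hinner s)]
      rw [intervalIntegral.integral_add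
        ((hcont1.intervalIntegrable _ _).const_mul _)
        ((hcont2.intervalIntegrable _ _).const_mul _),
        intervalIntegral.integral_const_mul, intervalIntegral.integral_const_mul]
    have hswap1 : ∫ s in (s₀ - 2⁻¹)..(s₀ + 2⁻¹),
        ∫ t in (t₀ - 2⁻¹)..(t₀ + 2⁻¹), fderiv ℝ f (φ s t) v₁ v₁ = 0 := by
      rw [aux_swap (fun s t => fderiv ℝ f (φ s t) v₁ v₁) (by exact hGc v₁ v₁)
        (by linarith) (by linarith)]
      rw [intervalIntegral.integral_congr (g := fun _ => (0 : ℝ)) (fun t _ => key1 v₁ t)]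
      simp
    have hswap2 : ∫ s in (s₀ - 2⁻¹)..(s₀ + 2⁻¹),
        ∫ t in (t₀ - 2⁻¹)..(t₀ + 2⁻¹), fderiv ℝ f (φ s t) v₁ v₂ = 0 := by
      rw [aux_swap (fun s t => fderiv ℝ f (φ s t) v₁ v₂) (by exact hGc v₁ v₂)
        (by linarith) (by linarith)]
      rw [intervalIntegral.integral_congr (g := fun _ => (0 : ℝ)) (fun t _ => key1 v₂ t)]
      simp
    have h0 : ∫ s in (s₀ - 2⁻¹)..(s₀ + 2⁻¹), -(2 * I s) = 0 := by
      rw [houter, hswap1, hswap2, mul_zero, mul_zero, add_zero]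
    have hlin : ∫ s in (s₀ - 2⁻¹)..(s₀ + 2⁻¹), -(2 * I s) =
        -(2 * ∫ s in (s₀ - 2⁻¹)..(s₀ + 2⁻¹), I s) := by
      rw [← intervalIntegral.integral_const_mul, ← intervalIntegral.integral_neg]
    rw [hlin] at h0
    linarith
  -- positivity argument
  have hIc : Continuous I := continuous_parametric_intervalIntegral_of_continuous' (f := F) hFc _ _
  have hInn : ∀ s, 0 ≤ I s := fun s =>
    intervalIntegral.integral_nonneg (by linarith) (fun t _ => hFnn s t)
  have hF0 : F s₀ t₀ = 0 := by
    by_contra hne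
    have hpos : 0 < F s₀ t₀ := lt_of_le_of_ne (hFnn s₀ t₀) (Ne.symm hne)
    have h1 : 0 < I s₀ := by
      apply intervalIntegral.integral_pos (by linarith)
        ((hFc.comp (continuous_const.prodMk continuous_id)).continuousOn)
        (fun t _ => hFnn s₀ t)
      exact ⟨t₀, ⟨by linarith, by linarith⟩, hpos⟩
    have h2 : 0 < ∫ s in (s₀ - 2⁻¹)..(s₀ + 2⁻¹), I s := by
      apply intervalIntegral.integral_pos (by linarith) hIc.continuousOn (fun s _ => hInn s)
      exact ⟨s₀, ⟨by linarith, by linarith⟩, h1⟩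
    linarith
  -- conclude
  have hg : gradient u x₀ = 0 := by
    have : ‖gradient u x₀‖ ^ 2 = 0 := by
      rw [← hx₀]; exact hF0
    have := pow_eq_zero_iff (n := 2) (by norm_num) |>.mp this
    exact norm_eq_zero.mp this
  have hfe : fderiv ℝ u x₀ =
      (InnerProductSpace.toDual ℝ (EuclideanSpace ℝ (Fin 2))) (gradient u x₀) :=
    ((InnerProductSpace.toDual ℝ _).apply_symm_apply _).symm
  show fderiv ℝ u x₀ = 0
  rw [hfe, hg, map_zero]
end
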